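/- Under the Setup below, for every integer 0 ≤ i ≤ n-2 one has a·x·i - f(i) = (n-1)(a·r_i + p_i); consequently i·a·x ≡ f(i) (mod n-1), and if i ∈ F_k (i.e., k = -⌊f(i)/(n-1)⌋) then s_{2,i} = f(i) + k(n-1), where s_{2,i} is the remainder of i·a·x upon division by n-1. -/
import Mathlib


/-- same Setup as Statement 12, with `f(i) := a·r_i - (xv-1)·p_i + x·a·q_i`
and `F_k := {i : k = -⌊f(i)/(n-1)⌋}`: for every `0 ≤ i ≤ n-2` one has
`a·x·i - f(i) = (n-1)(a·r_i + p_i)`; consequently `i·a·x ≡ f(i) (mod n-1)`, and if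
`i ∈ F_k` then `s_{2,i} = f(i) + k(n-1)`, where `s_{2,i}` is the remainder of `i·a·x`
upon division by `n-1`. -/
theorem stmt_13 (a x u v : ℕ) (ha : 3 ≤ a) (hax : a ≤ x)
    (hu : u ≤ a - 3) (hv1 : u + 2 ≤ v) (hv2 : v ≤ a - 1) (hv3 : v * x ≤ a * (x - 1))
    (n : ℕ) (hn : n = x * ((a + 1) * (v - 1) + 1))
    (i r p q : ℕ) (hi : i ≤ n - 2)
    (hdecomp : i = (n / x) * r + (v - 1) * p + q)
    (hr : r < x) (hpq : (v - 1) * p + q < (a + 1) * (v - 1) + 1)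
    (hp : p ≤ a + 1) (hq : q < v - 1 ∨ q = 0) (hpa : p = a + 1 → q = 0)
    (f : ℤ) (hf : f = (a : ℤ) * r - ((x : ℤ) * v - 1) * p + (x : ℤ) * a * q) :
    (a : ℤ) * x * i - f = ((n : ℤ) - 1) * ((a : ℤ) * r + p) ∧
      ((i : ℤ) * a * x) ≡ f [ZMOD ((n : ℤ) - 1)] ∧
      ∀ k : ℤ, k = -(f / ((n : ℤ) - 1)) →
        ((i : ℤ) * a * x) % ((n : ℤ) - 1) = f + k * ((n : ℤ) - 1) := by
  have hx0 : 0 < x := by omega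
  obtain ⟨V, rfl⟩ : ∃ V, v = V + 1 := ⟨v - 1, by omega⟩
  have hV : V + 1 - 1 = V := rfl
  rw [hV] at hdecomp hpq hq
  have hnx : n / x = (a + 1) * V + 1 := by
    rw [hn, hV, Nat.mul_div_cancel_left _ hx0]
  rw [hnx] at hdecomp
  have hnZ : (n : ℤ) = (x : ℤ) * ((a + 1) * V + 1) := by rw [hn, hV]; push_cast; ring
  have hiZ : (i : ℤ) = ((a + 1) * V + 1 : ℤ) * r + (V : ℤ) * p + q := by
    rw [hdecomp]; push_cast; ring
  have key : (a : ℤ) * x * i - f = ((n : ℤ) - 1) * ((a : ℤ) * r + p) := by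
    rw [hf, hiZ, hnZ]; push_cast; ring
  refine ⟨key, ?_, ?_⟩
  · have : ((n : ℤ) - 1) ∣ f - (i : ℤ) * a * x := ⟨-((a : ℤ) * r + p), by linarith [key]⟩
    exact (Int.modEq_iff_dvd).mpr this
  · intro k hk
    have hmod : ((i : ℤ) * a * x) % ((n : ℤ) - 1) = f % ((n : ℤ) - 1) := by
      have : ((n : ℤ) - 1) ∣ f - (i : ℤ) * a * x := ⟨-((a : ℤ) * r + p), by linarith [key]⟩
      exact (Int.modEq_iff_dvd).mpr this
    rw [hmod, hk, Int.emod_def]; ring
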